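/- Let f : ℝ → ℝ satisfy f'' ≥ 0 and |f'''| ≤ M·f'' on ℝ for some M > 0. Then for all x, y ∈ ℝ, f(y) − f(x) − f'(x)(y − x) ≥ f''(x)·(y − x)²·(exp(−M|y−x|) + M|y−x| − 1)/(M|y−x|)² (interpreting the right side by its limit f''(x)(y−x)²/2 when y = x). -/

import Mathlib

/-- Grönwall-type lower bound: if `g ≥ 0`, `g` differentiable with `|g'| ≤ M g`,
then `g z ≥ g x * exp (-(M * |z - x|))`. -/
lemma gronwall_aux (g : ℝ → ℝ) (hg : Differentiable ℝ g) (M : ℝ) (hM : 0 < M)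
    (hge : ∀ t, 0 ≤ g t) (hbd : ∀ t, |deriv g t| ≤ M * g t) (x z : ℝ) :
    g x * Real.exp (-(M * |z - x|)) ≤ g z := by
  have hexp : ∀ t : ℝ, HasDerivAt (fun t => Real.exp (M * t)) (M * Real.exp (M * t)) t := by
    intro t
    have h1 : HasDerivAt (fun t : ℝ => M * t) M t := by
      simpa using (hasDerivAt_id t).const_mul M
    simpa [mul_comm, Function.comp_def] using (Real.hasDerivAt_exp (M * t)).comp t h1
  have hexpn : ∀ t : ℝ, HasDerivAt (fun t => Real.exp (-(M * t))) (-(M * Real.exp (-(M * t)))) t := by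
    intro t
    have h1 : HasDerivAt (fun t : ℝ => -(M * t)) (-M) t := by
      simpa [Pi.neg_def] using ((hasDerivAt_id t).const_mul M).neg
    have := (Real.hasDerivAt_exp (-(M * t))).comp t h1
    simpa [mul_comm, Function.comp_def] using this
  rcases le_total x z with hxz | hzx
  · -- forward: φ t = g t * exp (M t) is monotone
    have hφd : ∀ t : ℝ, HasDerivAt (fun t => g t * Real.exp (M * t))
        (deriv g t * Real.exp (M * t) + g t * (M * Real.exp (M * t))) t := by
      intro t
      exact ((hg t).hasDerivAt).mul (hexp t)
    have hmono : Monotone (fun t => g t * Real.exp (M * t)) := by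
      apply monotone_of_deriv_nonneg
      · exact fun t => ((hφd t).differentiableAt)
      · intro t
        rw [(hφd t).deriv]
        have h1 : -(M * g t) ≤ deriv g t := (abs_le.mp (hbd t)).1
        have h2 : 0 < Real.exp (M * t) := Real.exp_pos _
        nlinarith [h2.le, hge t]
    have := hmono hxz
    simp only at this
    have h2 : 0 < Real.exp (M * z) := Real.exp_pos _
    rw [abs_of_nonneg (sub_nonneg.mpr hxz)]
    have key : g x * Real.exp (M * x) ≤ g z * Real.exp (M * z) := this
    have : g x * Real.exp (-(M * (z - x))) = (g x * Real.exp (M * x)) * Real.exp (-(M * z)) := by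
      rw [mul_assoc, ← Real.exp_add]; ring_nf
    rw [this]
    calc (g x * Real.exp (M * x)) * Real.exp (-(M * z))
        ≤ (g z * Real.exp (M * z)) * Real.exp (-(M * z)) := by
          apply mul_le_mul_of_nonneg_right key (Real.exp_pos _).le
      _ = g z := by rw [mul_assoc, ← Real.exp_add]; simp
  · -- backward: ψ t = g t * exp (-(M t)) is antitone
    have hψd : ∀ t : ℝ, HasDerivAt (fun t => g t * Real.exp (-(M * t)))
        (deriv g t * Real.exp (-(M * t)) + g t * (-(M * Real.exp (-(M * t))))) t := by
      intro t
      exact ((hg t).hasDerivAt).mul (hexpn t)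
    have hanti : Antitone (fun t => g t * Real.exp (-(M * t))) := by
      apply antitone_of_deriv_nonpos
      · exact fun t => ((hψd t).differentiableAt)
      · intro t
        rw [(hψd t).deriv]
        have h1 : deriv g t ≤ M * g t := (abs_le.mp (hbd t)).2
        have h2 : 0 < Real.exp (-(M * t)) := Real.exp_pos _
        nlinarith [h2.le, hge t]
    have key := hanti hzx
    simp only at key
    rw [abs_of_nonpos (sub_nonpos.mpr hzx)]
    have : g x * Real.exp (-(M * -(z - x))) = (g x * Real.exp (-(M * x))) * Real.exp (M * z) := by
      rw [mul_assoc, ← Real.exp_add]; ring_nf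
    rw [this]
    calc (g x * Real.exp (-(M * x))) * Real.exp (M * z)
        ≤ (g z * Real.exp (-(M * z))) * Real.exp (M * z) := by
          apply mul_le_mul_of_nonneg_right key (Real.exp_pos _).le
      _ = g z := by rw [mul_assoc, ← Real.exp_add]; simp

theorem stmt_1 (f : ℝ → ℝ) (hf : ContDiff ℝ 3 f) (M : ℝ) (hM : 0 < M)
    (hf'' : ∀ x, 0 ≤ deriv (deriv f) x)
    (hf''' : ∀ x, |deriv (deriv (deriv f)) x| ≤ M * deriv (deriv f) x) :
    ∀ x y : ℝ,
      f y - f x - deriv f x * (y - x) ≥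
        deriv (deriv f) x * (y - x) ^ 2 *
          (if y = x then 1 / 2
           else (Real.exp (-(M * |y - x|)) + M * |y - x| - 1) / (M * |y - x|) ^ 2) := by
  -- regularity
  have hd1 : Differentiable ℝ f := hf.differentiable (by norm_num)
  have hc2 : ContDiff ℝ 2 (deriv f) := by
    have h : ContDiff ℝ ((2:ℕ∞)+1) f := by exact_mod_cast hf
    exact (contDiff_succ_iff_deriv.mp h).2.2
  have hd2 : Differentiable ℝ (deriv f) := hc2.differentiable (by norm_num)
  have hc1 : ContDiff ℝ 1 (deriv (deriv f)) := by
    have h : ContDiff ℝ ((1:ℕ∞)+1) (deriv f) := by exact_mod_cast hc2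
    exact (contDiff_succ_iff_deriv.mp h).2.2
  have hd3 : Differentiable ℝ (deriv (deriv f)) := hc1.differentiable one_ne_zero
  set g := deriv (deriv f) with hgdef
  have hgron : ∀ a b : ℝ, g a * Real.exp (-(M * |b - a|)) ≤ g b :=
    gronwall_aux g hd3 M hM hf'' hf'''
  intro x y
  by_cases hxy : y = x
  · subst hxy; simp
  · rw [if_neg hxy]
    set s := y - x with hs
    have hs0 : s ≠ 0 := sub_ne_zero.mpr hxy
    set u := M * |s| with hu
    have hu0 : 0 < u := mul_pos hM (abs_pos.mpr hs0)
    set c := g x with hc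
    have hc0 : 0 ≤ c := hf'' x
    -- G, G1, G2
    set G : ℝ → ℝ := fun t => f (x + t * s) - f x - deriv f x * (t * s) -
      c * s ^ 2 / u ^ 2 * (Real.exp (-(u * t)) + u * t - 1) with hG
    set G1 : ℝ → ℝ := fun t => deriv f (x + t * s) * s - deriv f x * s -
      c * s ^ 2 / u ^ 2 * (Real.exp (-(u * t)) * (-u) + u) with hG1
    have hlin : ∀ t : ℝ, HasDerivAt (fun t : ℝ => x + t * s) s t := by
      intro t; simpa using ((hasDerivAt_id t).mul_const s).const_add x
    have hexpn : ∀ t : ℝ, HasDerivAt (fun t => Real.exp (-(u * t))) (Real.exp (-(u * t)) * (-u)) t := by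
      intro t
      have h1 : HasDerivAt (fun t : ℝ => -(u * t)) (-u) t := by
        simpa [Pi.neg_def] using ((hasDerivAt_id t).const_mul u).neg
      exact (Real.hasDerivAt_exp (-(u * t))).comp t h1
    have hGd : ∀ t : ℝ, HasDerivAt G (G1 t) t := by
      intro t
      have hA : HasDerivAt (fun t => f (x + t * s)) (deriv f (x + t * s) * s) t :=
        ((hd1 _).hasDerivAt).comp t (hlin t)
      have hB : HasDerivAt (fun t : ℝ => deriv f x * (t * s)) (deriv f x * s) t := by
        simpa [mul_assoc] using ((hasDerivAt_id t).mul_const s).const_mul (deriv f x)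
      have hQ : HasDerivAt (fun t => c * s ^ 2 / u ^ 2 * (Real.exp (-(u * t)) + u * t - 1))
          (c * s ^ 2 / u ^ 2 * (Real.exp (-(u * t)) * (-u) + u)) t := by
        have h2 : HasDerivAt (fun t : ℝ => Real.exp (-(u * t)) + u * t - 1)
            (Real.exp (-(u * t)) * (-u) + u) t := by
          have h3 : HasDerivAt (fun t : ℝ => u * t) u t := by
            simpa using (hasDerivAt_id t).const_mul u
          exact ((hexpn t).add h3).sub_const 1
        exact h2.const_mul _
      simpa [hG, hG1, Pi.sub_def] using ((hA.sub_const (f x)).sub hB).sub hQ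
    have hG1d : ∀ t : ℝ, HasDerivAt G1 (g (x + t * s) * s ^ 2 -
        c * s ^ 2 / u ^ 2 * (Real.exp (-(u * t)) * u ^ 2)) t := by
      intro t
      have hA : HasDerivAt (fun t => deriv f (x + t * s) * s) (g (x + t * s) * s * s) t := by
        exact (((hd2 _).hasDerivAt).comp t (hlin t)).mul_const s
      have hQ : HasDerivAt (fun t => c * s ^ 2 / u ^ 2 * (Real.exp (-(u * t)) * (-u) + u))
          (c * s ^ 2 / u ^ 2 * (Real.exp (-(u * t)) * (-u) * (-u))) t := by
        have h2 : HasDerivAt (fun t : ℝ => Real.exp (-(u * t)) * (-u) + u)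
            (Real.exp (-(u * t)) * (-u) * (-u)) t := by
          simpa using ((hexpn t).mul_const (-u)).add_const u
        exact h2.const_mul _
      have := (hA.sub_const (deriv f x * s)).fun_sub hQ
      exact this.congr_deriv (by ring)
    -- second derivative nonneg for t ≥ 0
    have hG1deriv_nonneg : ∀ t : ℝ, 0 ≤ t →
        0 ≤ g (x + t * s) * s ^ 2 - c * s ^ 2 / u ^ 2 * (Real.exp (-(u * t)) * u ^ 2) := by
      intro t ht
      have hkey : c * Real.exp (-(u * t)) ≤ g (x + t * s) := by
        have := hgron x (x + t * s)
        have habs : |x + t * s - x| = t * |s| := by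
          rw [add_sub_cancel_left, abs_mul, abs_of_nonneg ht]
        rw [habs] at this
        have : c * Real.exp (-(M * (t * |s|))) ≤ g (x + t * s) := this
        have heq : M * (t * |s|) = u * t := by rw [hu]; ring
        rwa [heq] at this
      have h1 : c * s ^ 2 / u ^ 2 * (Real.exp (-(u * t)) * u ^ 2) =
          c * Real.exp (-(u * t)) * s ^ 2 := by
        field_simp
      rw [h1]
      have := sq_nonneg s
      nlinarith
    -- G1 nonneg on [0,1]
    have hG10 : G1 0 = 0 := by simp [hG1]
    have hG1mono : MonotoneOn G1 (Set.Icc 0 1) := by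
      apply monotoneOn_of_deriv_nonneg (convex_Icc 0 1)
      · exact fun t _ => ((hG1d t).differentiableAt).continuousAt.continuousWithinAt
      · exact fun t _ => ((hG1d t).differentiableAt).differentiableWithinAt
      · intro t ht
        rw [interior_Icc] at ht
        rw [(hG1d t).deriv]
        exact hG1deriv_nonneg t ht.1.le
    have hG1nonneg : ∀ t ∈ Set.Icc (0:ℝ) 1, 0 ≤ G1 t := by
      intro t ht
      have := hG1mono (Set.left_mem_Icc.mpr zero_le_one) ht ht.1
      rwa [hG10] at this
    -- G monotone on [0,1]
    have hGmono : MonotoneOn G (Set.Icc 0 1) := by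
      apply monotoneOn_of_deriv_nonneg (convex_Icc 0 1)
      · exact fun t _ => ((hGd t).differentiableAt).continuousAt.continuousWithinAt
      · exact fun t _ => ((hGd t).differentiableAt).differentiableWithinAt
      · intro t ht
        rw [interior_Icc] at ht
        rw [(hGd t).deriv]
        exact hG1nonneg t ⟨ht.1.le, ht.2.le⟩
    have hG0 : G 0 = 0 := by simp [hG]
    have hfin : 0 ≤ G 1 := by
      have := hGmono (Set.left_mem_Icc.mpr zero_le_one) (Set.right_mem_Icc.mpr zero_le_one)
        zero_le_one
      rwa [hG0] at this
    -- conclude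
    have hG1eq : G 1 = f y - f x - deriv f x * s -
        c * s ^ 2 / u ^ 2 * (Real.exp (-u) + u - 1) := by
      simp [hG, hs]
    rw [hG1eq] at hfin
    have : c * s ^ 2 * ((Real.exp (-u) + u - 1) / u ^ 2) =
        c * s ^ 2 / u ^ 2 * (Real.exp (-u) + u - 1) := by ring
    rw [ge_iff_le, this]
    linarith
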